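/- Let F = f^⊕ and G = g^⊕ be cyclically symmetric homogeneous polynomials of degrees r' and r'' respectively, with seed f of class D(C_f, σ') and seed g of class D(C_g, σ''), where σ' ≠ σ''. Then the Poisson bracket {F,G} admits a seed of class D(C_h, min(σ',σ'')) with C_h = r' r'' C_f C_g / ((1 − e^{−max(σ',σ'')})(1 − e^{−|σ'−σ''|})). -/

import Mathlib

open MvPolynomial

/-- Polynomials in the `2N` phase-space variables `x_0,…,x_{N−1},y_0,…,y_{N−1}`:
`Sum.inl l` is the variable `x_l` and `Sum.inr l` is `y_l`. -/
abbrev Pol (N : ℕ) := MvPolynomial (Fin N ⊕ Fin N) ℝ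

/-- Poisson bracket `{f,g} = Σ_l (∂f/∂x_l ∂g/∂y_l − ∂f/∂y_l ∂g/∂x_l)`. -/
noncomputable def pbracket {N : ℕ} (f g : Pol N) : Pol N :=
  ∑ l : Fin N,
    (pderiv (Sum.inl l) f * pderiv (Sum.inr l) g -
      pderiv (Sum.inr l) f * pderiv (Sum.inl l) g)

/-- Polynomial norm: the sum of the absolute values of the coefficients. -/
noncomputable def pnorm {N : ℕ} (f : Pol N) : ℝ :=
  ∑ d ∈ f.support, |coeff d f|

/-- Action of the cyclic permutation `τ` on polynomials: `(τ f)(x,y) = f(τx, τy)`,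
where `(τ x)_j = x_{j+1 mod N}`. -/
noncomputable def cshiftP {N : ℕ} (f : Pol N) : Pol N :=
  rename (Sum.map (finRotate N : Fin N → Fin N) (finRotate N : Fin N → Fin N)) f

/-- The extensive function generated by a seed: `f^⊕ = Σ_{l=1}^N τ^l f`. -/
noncomputable def oplus {N : ℕ} (f : Pol N) : Pol N :=
  ∑ l ∈ Finset.Icc 1 N, cshiftP^[l] f

/-- Set of sites appearing (in `x` or `y`) with nonzero exponent in a monomial. -/
def siteSupport {N : ℕ} (d : (Fin N ⊕ Fin N) →₀ ℕ) : Finset (Fin N) :=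
  Finset.univ.filter fun l => d (Sum.inl l) ≠ 0 ∨ d (Sum.inr l) ≠ 0

/-- `f` is left aligned with interaction range at most `m`: every monomial of `f`
involves only the sites `0,…,m`. -/
def RangeLE {N : ℕ} (m : ℕ) (f : Pol N) : Prop :=
  ∀ d ∈ f.support, ∀ l ∈ siteSupport d, (l : ℕ) ≤ m

/-- `F` is a decomposition `f = Σ_{m≥0} f^{(m)}` of the seed `f` into left-aligned
components of increasing interaction range (truncated at `m = N` on the periodic chain). -/
def IsDecomp {N : ℕ} (f : Pol N) (F : ℕ → Pol N) : Prop :=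
  f = ∑ m ∈ Finset.range (N + 1), F m ∧ ∀ m, RangeLE m (F m)

/-- Exponential decay `‖f^{(m)}‖ ≤ C e^{−σm}` of the components of a decomposition. -/
def Decay {N : ℕ} (C σ : ℝ) (F : ℕ → Pol N) : Prop :=
  ∀ m : ℕ, pnorm (F m) ≤ C * Real.exp (-σ * m)

/-- A seed `f` is of class `D(C,σ)` if it admits a decomposition `f = Σ_m f^{(m)}`
into left-aligned components of interaction range at most `m` with `‖f^{(m)}‖ ≤ C e^{−σm}`. -/
def SeedClassD {N : ℕ} (C σ : ℝ) (f : Pol N) : Prop :=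
  ∃ F : ℕ → Pol N, IsDecomp f F ∧ Decay C σ F



namespace S5

open Fin.NatCast



variable {N : ℕ}

lemma pnorm_nonneg (p : Pol N) : 0 ≤ pnorm p :=
  Finset.sum_nonneg fun _ _ => abs_nonneg _

lemma pnorm_zero : pnorm (0 : Pol N) = 0 := by simp [pnorm]

lemma pnorm_eq_sum {p : Pol N} {s : Finset ((Fin N ⊕ Fin N) →₀ ℕ)} (h : p.support ⊆ s) :
    pnorm p = ∑ d ∈ s, |coeff d p| := by
  refine Finset.sum_subset h fun d _ hd => ?_
  rw [MvPolynomial.notMem_support_iff.mp hd, abs_zero]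

lemma pnorm_add_le (p q : Pol N) : pnorm (p + q) ≤ pnorm p + pnorm q := by
  classical
  rw [pnorm_eq_sum (s := p.support ∪ q.support) (MvPolynomial.support_add),
    pnorm_eq_sum (s := p.support ∪ q.support) Finset.subset_union_left,
    pnorm_eq_sum (s := p.support ∪ q.support) Finset.subset_union_right,
    ← Finset.sum_add_distrib]
  exact Finset.sum_le_sum fun d _ => by rw [coeff_add]; exact abs_add_le _ _

lemma pnorm_neg (p : Pol N) : pnorm (-p) = pnorm p := by
  classical
  rw [pnorm_eq_sum (s := p.support) (by simp [MvPolynomial.support_neg]), pnorm]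
  exact Finset.sum_congr rfl fun d _ => by simp

lemma pnorm_sub_le (p q : Pol N) : pnorm (p - q) ≤ pnorm p + pnorm q := by
  rw [sub_eq_add_neg]
  exact (pnorm_add_le p (-q)).trans (by rw [pnorm_neg])

lemma pnorm_sum_le {α : Type*} (s : Finset α) (p : α → Pol N) :
    pnorm (∑ a ∈ s, p a) ≤ ∑ a ∈ s, pnorm (p a) := by
  classical
  induction s using Finset.induction_on with
  | empty => simp [pnorm_zero]
  | insert _ _ h ih =>
      rw [Finset.sum_insert h, Finset.sum_insert h]
      exact (pnorm_add_le _ _).trans (by linarith)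

lemma pnorm_monomial_le (d : (Fin N ⊕ Fin N) →₀ ℕ) (a : ℝ) :
    pnorm (monomial d a) ≤ |a| := by
  classical
  rcases eq_or_ne a 0 with rfl | ha
  · simp [pnorm_zero]
  · rw [pnorm_eq_sum (s := {d}) (by rw [MvPolynomial.support_monomial]; simp [ha])]
    simp

lemma pnorm_mul_le (p q : Pol N) : pnorm (p * q) ≤ pnorm p * pnorm q := by
  classical
  conv_lhs => rw [p.as_sum, q.as_sum, Finset.sum_mul_sum]
  refine (pnorm_sum_le _ _).trans ?_
  rw [pnorm, pnorm, Finset.sum_mul_sum]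
  refine Finset.sum_le_sum fun u _ => ?_
  refine (pnorm_sum_le _ _).trans (Finset.sum_le_sum fun v _ => ?_)
  rw [MvPolynomial.monomial_mul]
  exact (pnorm_monomial_le _ _).trans (by rw [abs_mul])

lemma pnorm_rename_le {f : (Fin N ⊕ Fin N) → (Fin N ⊕ Fin N)} (p : Pol N) :
    pnorm (rename f p) ≤ pnorm p := by
  classical
  conv_lhs => rw [p.as_sum, map_sum]
  refine (pnorm_sum_le _ _).trans ?_
  rw [pnorm]
  refine Finset.sum_le_sum fun d _ => ?_
  rw [rename_monomial]
  exact pnorm_monomial_le _ _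


lemma pderiv_as_sum (v : Fin N ⊕ Fin N) (p : Pol N) :
    pderiv v p = ∑ d ∈ p.support, monomial (d - Finsupp.single v 1) (coeff d p * d v) := by
  conv_lhs => rw [p.as_sum, map_sum]
  exact Finset.sum_congr rfl fun d _ => pderiv_monomial

lemma pnorm_pderiv_le (v : Fin N ⊕ Fin N) (p : Pol N) :
    pnorm (pderiv v p) ≤ ∑ d ∈ p.support, |coeff d p| * d v := by
  rw [pderiv_as_sum]
  refine (pnorm_sum_le _ _).trans (Finset.sum_le_sum fun d _ => ?_)
  refine (pnorm_monomial_le _ _).trans ?_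
  rw [abs_mul, Nat.abs_cast]

lemma degree_eq_sum_univ (d : (Fin N ⊕ Fin N) →₀ ℕ) :
    (d.degree : ℕ) = ∑ v : Fin N ⊕ Fin N, d v := by
  rw [Finsupp.degree]
  exact Finset.sum_subset (Finset.subset_univ _)
    (fun v _ hv => Finsupp.notMem_support_iff.mp hv)

lemma sum_pnorm_pderiv_le {r : ℕ} {p : Pol N} (hp : p.IsHomogeneous r) :
    ∑ v : Fin N ⊕ Fin N, pnorm (pderiv v p) ≤ r * pnorm p := by
  refine (Finset.sum_le_sum fun v _ => pnorm_pderiv_le v p).trans ?_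
  rw [Finset.sum_comm, pnorm, Finset.mul_sum]
  refine Finset.sum_le_sum fun d hd => ?_
  have hdeg : (d.degree : ℕ) = r := by
    have := hp (MvPolynomial.mem_support_iff.mp hd)
    rw [Finsupp.degree_eq_weight_one]; exact this
  rw [← Finset.mul_sum, ← Nat.cast_sum, ← degree_eq_sum_univ, hdeg, mul_comm]



abbrev rot (N : ℕ) : Fin N → Fin N := (finRotate N : Fin N → Fin N)
abbrev emap (N : ℕ) : (Fin N ⊕ Fin N) → (Fin N ⊕ Fin N) := Sum.map (rot N) (rot N)

lemma rot_bij : Function.Bijective (rot N) := (finRotate N).bijective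

lemma rot_iter_bij (l : ℕ) : Function.Bijective ((rot N)^[l]) := rot_bij.iterate l

lemma emap_iter_inl (l : ℕ) (i : Fin N) :
    (emap N)^[l] (Sum.inl i) = Sum.inl ((rot N)^[l] i) := by
  induction l with
  | zero => rfl
  | succ l ih => rw [Function.iterate_succ_apply', Function.iterate_succ_apply', ih]; rfl

lemma emap_iter_inr (l : ℕ) (i : Fin N) :
    (emap N)^[l] (Sum.inr i) = Sum.inr ((rot N)^[l] i) := by
  induction l with
  | zero => rfl
  | succ l ih => rw [Function.iterate_succ_apply', Function.iterate_succ_apply', ih]; rfl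

lemma emap_iter_eq (l : ℕ) :
    (emap N)^[l] = Sum.map ((rot N)^[l]) ((rot N)^[l]) := by
  funext v
  cases v with
  | inl i => rw [emap_iter_inl]; rfl
  | inr i => rw [emap_iter_inr]; rfl

lemma emap_iter_inj (l : ℕ) : Function.Injective ((emap N)^[l]) := by
  rw [emap_iter_eq]
  exact (rot_iter_bij l).injective.sumMap (rot_iter_bij l).injective

lemma cshiftP_iterate (l : ℕ) (p : Pol N) :
    cshiftP^[l] p = rename ((emap N)^[l]) p := by
  induction l with
  | zero => simp [MvPolynomial.rename_id]
  | succ l ih =>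
      rw [Function.iterate_succ_apply', ih, cshiftP, MvPolynomial.rename_rename,
        Function.iterate_succ']

lemma rot_iter_apply {n : ℕ} (l : ℕ) (i : Fin (n + 1)) :
    (rot (n + 1))^[l] i = i + (l : Fin (n + 1)) := by
  induction l with
  | zero => simp
  | succ l ih =>
      rw [Function.iterate_succ_apply', ih, rot, finRotate_succ_apply]
      push_cast
      rw [add_assoc]

lemma rot_iter_val {n : ℕ} (l : ℕ) (i : Fin (n + 1)) :
    (((rot (n + 1))^[l] i : Fin (n + 1)) : ℕ) = ((i : ℕ) + l) % (n + 1) := by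
  rw [rot_iter_apply, Fin.add_def, Fin.val_natCast]
  conv_rhs => rw [Nat.add_mod, Nat.mod_eq_of_lt i.isLt]

lemma cshiftP_iterate_N (p : Pol N) : cshiftP^[N] p = p := by
  cases N with
  | zero => rfl
  | succ n =>
      rw [cshiftP_iterate]
      have h : (emap (n + 1))^[n + 1] = id := by
        funext v
        cases v with
        | inl i => rw [emap_iter_inl, rot_iter_apply]; simp
        | inr i => rw [emap_iter_inr, rot_iter_apply]; simp
      rw [h, MvPolynomial.rename_id, AlgHom.id_apply]

lemma cshiftP_mod (m : ℕ) (p : Pol N) : cshiftP^[m] p = cshiftP^[m % N] p := by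
  rcases Nat.eq_zero_or_pos N with h | h
  · subst h; simp [Nat.mod_zero]
  · conv_lhs => rw [← Nat.mod_add_div m N]
    rw [Function.iterate_add_apply, Function.iterate_mul]
    congr 1
    induction (m / N) with
    | zero => rfl
    | succ k ih => rw [Function.iterate_succ_apply, cshiftP_iterate_N, ih]


noncomputable def S (k : ℕ) (q : Pol N) : Pol N := ∑ m ∈ Finset.range N, cshiftP^[k + m] q

lemma S_succ (k : ℕ) (q : Pol N) : S (k + 1) q = S k q := by
  have h1 : S (k + 1) q = ∑ m ∈ Finset.range N, cshiftP^[k + (m + 1)] q := by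
    refine Finset.sum_congr rfl fun m _ => ?_
    congr 1
    omega
  have h2 : ∑ m ∈ Finset.range (N + 1), cshiftP^[k + m] q
      = S (k + 1) q + cshiftP^[k + 0] q := by
    rw [Finset.sum_range_succ' (fun m => cshiftP^[k + m] q) N, h1]
  have h3 : ∑ m ∈ Finset.range (N + 1), cshiftP^[k + m] q
      = S k q + cshiftP^[k + N] q := Finset.sum_range_succ _ N
  have h4 : cshiftP^[k + N] q = cshiftP^[k + 0] q := by
    rw [Nat.add_zero, Function.iterate_add_apply, cshiftP_iterate_N]
  rw [h4] at h3
  exact add_right_cancel (h2.symm.trans h3)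

lemma S_eq (k : ℕ) (q : Pol N) : S k q = S 0 q := by
  induction k with
  | zero => rfl
  | succ k ih => rw [S_succ, ih]

lemma sum_icc_shift' (k : ℕ) (q : Pol N) :
    ∑ l ∈ Finset.Icc 1 N, cshiftP^[k + l] q = oplus q := by
  have h : ∀ k', ∑ l ∈ Finset.Icc 1 N, cshiftP^[k' + l] q = S (k' + 1) q := by
    intro k'
    rw [← Finset.Ico_add_one_right_eq_Icc, Finset.sum_Ico_eq_sum_range, S]
    refine Finset.sum_congr (by simp) fun m _ => ?_
    congr 1
    omega
  have h0 : oplus q = S 1 q := by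
    have := h 0
    simpa [oplus] using this
  rw [h k, h0, S_eq (k + 1), S_eq 1]

lemma sum_range_shift (k : ℕ) (q : Pol N) :
    ∑ l ∈ Finset.range N, cshiftP^[k + l] q = oplus q := by
  have : ∑ l ∈ Finset.range N, cshiftP^[k + l] q = S k q := rfl
  rw [this, S_eq]
  have h0 : oplus q = S 1 q := by
    have := sum_icc_shift' 0 q
    rw [← this]
    rw [← Finset.Ico_add_one_right_eq_Icc, Finset.sum_Ico_eq_sum_range]
    refine Finset.sum_congr (by simp) fun m _ => ?_
    congr 1
    omega
  rw [h0, S_eq 1]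

lemma oplus_eq_range (q : Pol N) : oplus q = ∑ m ∈ Finset.range N, cshiftP^[m] q := by
  rw [← sum_range_shift 0 q]
  simp

lemma oplus_cshiftP_iter (s : ℕ) (q : Pol N) : oplus (cshiftP^[s] q) = oplus q := by
  rw [oplus, ← sum_icc_shift' s q]
  refine Finset.sum_congr rfl fun l hl => ?_
  rw [← Function.iterate_add_apply, Nat.add_comm]


lemma pderiv_cshift_inl (l : ℕ) (i : Fin N) (q : Pol N) :
    pderiv (Sum.inl ((rot N)^[l] i)) (cshiftP^[l] q)
      = rename ((emap N)^[l]) (pderiv (Sum.inl i) q) := by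
  rw [cshiftP_iterate, ← emap_iter_inl, pderiv_rename (emap_iter_inj l)]

lemma pderiv_cshift_inr (l : ℕ) (i : Fin N) (q : Pol N) :
    pderiv (Sum.inr ((rot N)^[l] i)) (cshiftP^[l] q)
      = rename ((emap N)^[l]) (pderiv (Sum.inr i) q) := by
  rw [cshiftP_iterate, ← emap_iter_inr, pderiv_rename (emap_iter_inj l)]

lemma pbracket_cshift_iter (k : ℕ) (p q : Pol N) :
    pbracket (cshiftP^[k] p) (cshiftP^[k] q) = cshiftP^[k] (pbracket p q) := by
  rw [pbracket, cshiftP_iterate k (pbracket p q), pbracket, map_sum]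
  rw [← Function.Bijective.sum_comp (rot_iter_bij (N := N) k)
    (fun j => pderiv (Sum.inl j) (cshiftP^[k] p) * pderiv (Sum.inr j) (cshiftP^[k] q) -
      pderiv (Sum.inr j) (cshiftP^[k] p) * pderiv (Sum.inl j) (cshiftP^[k] q))]
  refine Finset.sum_congr rfl fun i _ => ?_
  rw [pderiv_cshift_inl, pderiv_cshift_inr, pderiv_cshift_inl, pderiv_cshift_inr,
    map_sub, map_mul, map_mul]

lemma pbracket_sum_left {α : Type*} (s : Finset α) (p : α → Pol N) (q : Pol N) :
    pbracket (∑ a ∈ s, p a) q = ∑ a ∈ s, pbracket (p a) q := by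
  unfold pbracket
  rw [Finset.sum_comm]
  refine Finset.sum_congr rfl fun j _ => ?_
  rw [map_sum, map_sum, Finset.sum_mul, Finset.sum_mul, ← Finset.sum_sub_distrib]

lemma pbracket_sum_right {α : Type*} (s : Finset α) (p : Pol N) (q : α → Pol N) :
    pbracket p (∑ a ∈ s, q a) = ∑ a ∈ s, pbracket p (q a) := by
  unfold pbracket
  rw [Finset.sum_comm]
  refine Finset.sum_congr rfl fun j _ => ?_
  rw [map_sum, map_sum, Finset.mul_sum, Finset.mul_sum, ← Finset.sum_sub_distrib]

lemma oplus_pbracket_core (f g : Pol N) :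
    (∑ l ∈ Finset.range N, oplus (pbracket f (cshiftP^[l] g)))
      = pbracket (oplus f) (oplus g) := by
  have step1 : ∀ l, oplus (pbracket f (cshiftP^[l] g))
      = ∑ k ∈ Finset.Icc 1 N, pbracket (cshiftP^[k] f) (cshiftP^[k + l] g) := by
    intro l
    rw [oplus]
    refine Finset.sum_congr rfl fun k _ => ?_
    rw [← pbracket_cshift_iter]
    congr 1
    rw [← Function.iterate_add_apply]
  calc (∑ l ∈ Finset.range N, oplus (pbracket f (cshiftP^[l] g)))
      = ∑ l ∈ Finset.range N, ∑ k ∈ Finset.Icc 1 N,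
          pbracket (cshiftP^[k] f) (cshiftP^[k + l] g) := by
        exact Finset.sum_congr rfl fun l _ => step1 l
    _ = ∑ k ∈ Finset.Icc 1 N, pbracket (cshiftP^[k] f)
          (∑ l ∈ Finset.range N, cshiftP^[k + l] g) := by
        rw [Finset.sum_comm]
        exact Finset.sum_congr rfl fun k _ => (pbracket_sum_right _ _ _).symm
    _ = ∑ k ∈ Finset.Icc 1 N, pbracket (cshiftP^[k] f) (oplus g) := by
        exact Finset.sum_congr rfl fun k _ => by rw [sum_range_shift]
    _ = pbracket (oplus f) (oplus g) := by
        conv_lhs => rw [oplus]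
        rw [← pbracket_sum_left]
        rfl


def SitesB (p : Pol N) (P : Fin N → Prop) : Prop :=
  ∀ d ∈ p.support, ∀ j : Fin N, (d (Sum.inl j) ≠ 0 ∨ d (Sum.inr j) ≠ 0) → P j

lemma sitesB_mono {p : Pol N} {P Q : Fin N → Prop} (h : SitesB p P)
    (hPQ : ∀ j, P j → Q j) : SitesB p Q :=
  fun d hd j hj => hPQ j (h d hd j hj)

lemma sitesB_zero (P : Fin N → Prop) : SitesB (0 : Pol N) P := by
  intro d hd
  simp at hd

lemma sitesB_sum {α : Type*} {s : Finset α} {p : α → Pol N} {P : Fin N → Prop}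
    (h : ∀ a ∈ s, SitesB (p a) P) : SitesB (∑ a ∈ s, p a) P := by
  intro d hd j hj
  rw [MvPolynomial.mem_support_iff, MvPolynomial.coeff_sum] at hd
  obtain ⟨a, ha, hca⟩ := Finset.exists_ne_zero_of_sum_ne_zero hd
  exact h a ha d (MvPolynomial.mem_support_iff.mpr hca) j hj

lemma sitesB_sub {p q : Pol N} {P : Fin N → Prop} (hp : SitesB p P) (hq : SitesB q P) :
    SitesB (p - q) P := by
  intro d hd j hj
  rw [MvPolynomial.mem_support_iff, MvPolynomial.coeff_sub] at hd
  rcases sub_ne_zero.mp hd |> fun hne => (em (coeff d p ≠ 0)) with h | h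
  · exact hp d (MvPolynomial.mem_support_iff.mpr h) j hj
  · push_neg at h
    have : coeff d q ≠ 0 := fun hq0 => hd (by rw [h, hq0, sub_zero])
    exact hq d (MvPolynomial.mem_support_iff.mpr this) j hj

lemma siteB_add_exp {u v : (Fin N ⊕ Fin N) →₀ ℕ} {j : Fin N}
    (h : (u + v) (Sum.inl j) ≠ 0 ∨ (u + v) (Sum.inr j) ≠ 0) :
    (u (Sum.inl j) ≠ 0 ∨ u (Sum.inr j) ≠ 0) ∨ (v (Sum.inl j) ≠ 0 ∨ v (Sum.inr j) ≠ 0) := by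
  simp only [Finsupp.add_apply] at h
  omega

lemma sitesB_mul {p q : Pol N} {P : Fin N → Prop} (hp : SitesB p P) (hq : SitesB q P) :
    SitesB (p * q) P := by
  intro d hd j hj
  rw [MvPolynomial.mem_support_iff, MvPolynomial.coeff_mul] at hd
  obtain ⟨x, hx, hcx⟩ := Finset.exists_ne_zero_of_sum_ne_zero hd
  replace hx : x.1 + x.2 = d := by simpa using hx
  have hu : coeff x.1 p ≠ 0 := fun h0 => hcx (by rw [h0, zero_mul])
  have hv : coeff x.2 q ≠ 0 := fun h0 => hcx (by rw [h0, mul_zero])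
  subst hx
  rcases siteB_add_exp hj with h | h
  · exact hp _ (MvPolynomial.mem_support_iff.mpr hu) j h
  · exact hq _ (MvPolynomial.mem_support_iff.mpr hv) j h

lemma sitesB_pderiv {p : Pol N} {P : Fin N → Prop} (hp : SitesB p P) (v : Fin N ⊕ Fin N) :
    SitesB (pderiv v p) P := by
  rw [pderiv_as_sum]
  refine sitesB_sum fun u hu => ?_
  intro d hd j hj
  rw [MvPolynomial.mem_support_iff, MvPolynomial.coeff_monomial] at hd
  have hdu : u - Finsupp.single v 1 = d := by
    by_contra hne
    rw [if_neg hne] at hd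
    exact hd rfl
  subst hdu
  refine hp u hu j ?_
  simp only [Finsupp.tsub_apply] at hj
  omega

lemma sitesB_pbracket {p q : Pol N} {P : Fin N → Prop} (hp : SitesB p P) (hq : SitesB q P) :
    SitesB (pbracket p q) P := by
  refine sitesB_sum fun l _ => sitesB_sub
    (sitesB_mul (sitesB_pderiv hp _) (sitesB_pderiv hq _))
    (sitesB_mul (sitesB_pderiv hp _) (sitesB_pderiv hq _))

lemma sitesB_rename {p : Pol N} {P : Fin N → Prop} (hp : SitesB p P) (l : ℕ) :
    SitesB (rename ((emap N)^[l]) p) (fun j => ∃ i, P i ∧ j = (rot N)^[l] i) := by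
  intro d hd j hj
  obtain ⟨u, hud, hu⟩ := coeff_rename_ne_zero _ _ _ (MvPolynomial.mem_support_iff.mp hd)
  subst hud
  have key : ∀ w : Fin N ⊕ Fin N, (Finsupp.mapDomain ((emap N)^[l]) u) w ≠ 0 →
      ∃ w' ∈ u.support, (emap N)^[l] w' = w := by
    intro w hw
    have h1 : w ∈ (Finsupp.mapDomain ((emap N)^[l]) u).support := Finsupp.mem_support_iff.mpr hw
    have h2 := Finsupp.mapDomain_support h1
    obtain ⟨w', hw', hww⟩ := Finset.mem_image.mp h2
    exact ⟨w', hw', hww⟩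
  have hup : u ∈ p.support := MvPolynomial.mem_support_iff.mpr hu
  rcases hj with hj | hj
  · obtain ⟨w', hw', hww⟩ := key _ hj
    cases w' with
    | inl i =>
        rw [emap_iter_inl] at hww
        refine ⟨i, hp u hup i (Or.inl (Finsupp.mem_support_iff.mp hw')), ?_⟩
        exact (Sum.inl.injEq _ _).mp hww.symm
    | inr i =>
        rw [emap_iter_inr] at hww
        exact absurd hww (by simp)
  · obtain ⟨w', hw', hww⟩ := key _ hj
    cases w' with
    | inl i =>
        rw [emap_iter_inl] at hww
        exact absurd hww (by simp)
    | inr i =>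
        rw [emap_iter_inr] at hww
        refine ⟨i, hp u hup i (Or.inr (Finsupp.mem_support_iff.mp hw')), ?_⟩
        exact (Sum.inr.injEq _ _).mp hww.symm

lemma pderiv_inl_eq_zero_of_sites {p : Pol N} {P : Fin N → Prop} (hp : SitesB p P)
    {j : Fin N} (hj : ¬ P j) : pderiv (Sum.inl j) p = 0 := by
  rw [pderiv_as_sum]
  refine Finset.sum_eq_zero fun d hd => ?_
  have h0 : d (Sum.inl j) = 0 := by
    by_contra hcon
    exact hj (hp d hd j (Or.inl hcon))
  rw [h0]
  simp

lemma pderiv_inr_eq_zero_of_sites {p : Pol N} {P : Fin N → Prop} (hp : SitesB p P)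
    {j : Fin N} (hj : ¬ P j) : pderiv (Sum.inr j) p = 0 := by
  rw [pderiv_as_sum]
  refine Finset.sum_eq_zero fun d hd => ?_
  have h0 : d (Sum.inr j) = 0 := by
    by_contra hcon
    exact hj (hp d hd j (Or.inr hcon))
  rw [h0]
  simp

lemma pbracket_eq_zero_of_disjoint {p q : Pol N} {P Q : Fin N → Prop}
    (hp : SitesB p P) (hq : SitesB q Q) (hdisj : ∀ j, ¬ (P j ∧ Q j)) :
    pbracket p q = 0 := by
  refine Finset.sum_eq_zero fun j _ => ?_
  rcases em (P j) with h | h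
  · have h2 : ¬ Q j := fun hQ => hdisj j ⟨h, hQ⟩
    rw [pderiv_inl_eq_zero_of_sites hq h2, pderiv_inr_eq_zero_of_sites hq h2]
    ring
  · rw [pderiv_inl_eq_zero_of_sites hp h, pderiv_inr_eq_zero_of_sites hp h]
    ring


lemma orbit_sum {n : ℕ} (A : Fin (n + 1) → ℝ) (i : Fin (n + 1)) :
    ∑ l ∈ Finset.range (n + 1), A ((rot (n + 1))^[l] i) = ∑ j, A j := by
  have h1 : ∀ l ∈ Finset.range (n+1), A ((rot (n + 1))^[l] i) = A (i + (l : Fin (n+1))) :=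
    fun l _ => by rw [rot_iter_apply]
  rw [Finset.sum_congr rfl h1, ← Fin.sum_univ_eq_sum_range (fun l => A (i + (l : Fin (n+1))))]
  have h2 : ∀ k : Fin (n+1), A (i + ((k : ℕ) : Fin (n+1))) = A (i + k) := by
    intro k
    rw [Fin.cast_val_eq_self]
  rw [Finset.sum_congr rfl fun k _ => h2 k]
  exact Fintype.sum_equiv (Equiv.addLeft i) _ _ fun k => rfl

lemma key_bracket_sum {n r' r'' : ℕ} (P Q : Pol (n + 1))
    (hP : P.IsHomogeneous r') (hQ : Q.IsHomogeneous r'') :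
    ∑ l ∈ Finset.range (n + 1), pnorm (pbracket P (cshiftP^[l] Q))
      ≤ (r' : ℝ) * r'' * pnorm P * pnorm Q := by
  have hAnn : ∀ j : Fin (n+1), 0 ≤ pnorm (pderiv (Sum.inl j) P) + pnorm (pderiv (Sum.inr j) P) :=
    fun j => add_nonneg (pnorm_nonneg _) (pnorm_nonneg _)
  have step1 : ∀ l, pnorm (pbracket P (cshiftP^[l] Q)) ≤
      ∑ i : Fin (n+1),
        (pnorm (pderiv (Sum.inl ((rot (n+1))^[l] i)) P)
          + pnorm (pderiv (Sum.inr ((rot (n+1))^[l] i)) P))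
        * (pnorm (pderiv (Sum.inl i) Q) + pnorm (pderiv (Sum.inr i) Q)) := by
    intro l
    refine (pnorm_sum_le _ _).trans ?_
    rw [← Function.Bijective.sum_comp (rot_iter_bij (N := n+1) l)
      (fun j => pnorm (pderiv (Sum.inl j) P * pderiv (Sum.inr j) (cshiftP^[l] Q) -
        pderiv (Sum.inr j) P * pderiv (Sum.inl j) (cshiftP^[l] Q)))]
    refine Finset.sum_le_sum fun i _ => ?_
    refine (pnorm_sub_le _ _).trans ?_
    refine (add_le_add (pnorm_mul_le _ _) (pnorm_mul_le _ _)).trans ?_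
    rw [pderiv_cshift_inl, pderiv_cshift_inr]
    have e1 : pnorm (rename ((emap (n+1))^[l]) (pderiv (Sum.inl i) Q)) ≤
        pnorm (pderiv (Sum.inl i) Q) := pnorm_rename_le _
    have e2 : pnorm (rename ((emap (n+1))^[l]) (pderiv (Sum.inr i) Q)) ≤
        pnorm (pderiv (Sum.inr i) Q) := pnorm_rename_le _
    have n1 := pnorm_nonneg (pderiv (Sum.inl ((rot (n+1))^[l] i)) P)
    have n2 := pnorm_nonneg (pderiv (Sum.inr ((rot (n+1))^[l] i)) P)
    have n3 := pnorm_nonneg (pderiv (Sum.inl i) Q)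
    have n4 := pnorm_nonneg (pderiv (Sum.inr i) Q)
    have n5 := pnorm_nonneg (rename ((emap (n+1))^[l]) (pderiv (Sum.inl i) Q))
    have n6 := pnorm_nonneg (rename ((emap (n+1))^[l]) (pderiv (Sum.inr i) Q))
    nlinarith
  refine (Finset.sum_le_sum fun l _ => step1 l).trans ?_
  rw [Finset.sum_comm]
  have step2 : ∀ i : Fin (n+1), ∑ l ∈ Finset.range (n+1),
      (pnorm (pderiv (Sum.inl ((rot (n+1))^[l] i)) P)
        + pnorm (pderiv (Sum.inr ((rot (n+1))^[l] i)) P))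
      * (pnorm (pderiv (Sum.inl i) Q) + pnorm (pderiv (Sum.inr i) Q))
      = (∑ j : Fin (n+1), (pnorm (pderiv (Sum.inl j) P) + pnorm (pderiv (Sum.inr j) P)))
        * (pnorm (pderiv (Sum.inl i) Q) + pnorm (pderiv (Sum.inr i) Q)) := by
    intro i
    rw [← Finset.sum_mul, orbit_sum (fun j =>
      pnorm (pderiv (Sum.inl j) P) + pnorm (pderiv (Sum.inr j) P)) i]
  rw [Finset.sum_congr rfl fun i _ => step2 i, ← Finset.mul_sum]
  have hAle : (∑ j : Fin (n+1), (pnorm (pderiv (Sum.inl j) P) + pnorm (pderiv (Sum.inr j) P)))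
      ≤ (r' : ℝ) * pnorm P := by
    refine le_trans (le_of_eq ?_) (sum_pnorm_pderiv_le hP)
    rw [Fintype.sum_sum_type]
    rw [Finset.sum_add_distrib]
  have hBle : (∑ i : Fin (n+1), (pnorm (pderiv (Sum.inl i) Q) + pnorm (pderiv (Sum.inr i) Q)))
      ≤ (r'' : ℝ) * pnorm Q := by
    refine le_trans (le_of_eq ?_) (sum_pnorm_pderiv_le hQ)
    rw [Fintype.sum_sum_type]
    rw [Finset.sum_add_distrib]
  have hAnn2 : (0:ℝ) ≤ ∑ j : Fin (n+1),
      (pnorm (pderiv (Sum.inl j) P) + pnorm (pderiv (Sum.inr j) P)) :=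
    Finset.sum_nonneg fun j _ => hAnn j
  have hBnn2 : (0:ℝ) ≤ ∑ i : Fin (n+1),
      (pnorm (pderiv (Sum.inl i) Q) + pnorm (pderiv (Sum.inr i) Q)) :=
    Finset.sum_nonneg fun i _ => add_nonneg (pnorm_nonneg _) (pnorm_nonneg _)
  calc _ ≤ ((r' : ℝ) * pnorm P) * ((r'' : ℝ) * pnorm Q) :=
        mul_le_mul hAle hBle hBnn2 (mul_nonneg (Nat.cast_nonneg _) (pnorm_nonneg P))
    _ = (r' : ℝ) * r'' * pnorm P * pnorm Q := by ring



lemma geom_le {r : ℝ} (h0 : 0 ≤ r) (h1 : r < 1) (n : ℕ) :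
    ∑ i ∈ Finset.range n, r ^ i ≤ (1 - r)⁻¹ := by
  have h2 : (0:ℝ) < 1 - r := by linarith
  rw [geom_sum_eq h1.ne n, ← neg_div_neg_eq, neg_sub, neg_sub, inv_eq_one_div]
  exact div_le_div₀ (by norm_num) (by nlinarith [pow_nonneg h0 n]) h2 le_rfl

lemma diag_sum_le {x y : ℝ} (hx0 : 0 < x) (hx1 : x < 1) (hy0 : 0 < y) (hyx : y < x)
    (M : ℕ) : ∑ a ∈ Finset.range (M + 1), x ^ a * y ^ (M - a)
      ≤ x ^ M * (1 - y / x)⁻¹ := by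
  have hterm : ∀ a ∈ Finset.range (M + 1), x ^ a * y ^ (M - a) = x ^ M * (y / x) ^ (M - a) := by
    intro a ha
    rw [Finset.mem_range] at ha
    have haM : a + (M - a) = M := by omega
    obtain ⟨k, rfl⟩ : ∃ k, M = a + k := ⟨M - a, by omega⟩
    rw [Nat.add_sub_cancel_left, div_pow, pow_add, mul_assoc, mul_div_assoc',
      mul_div_cancel_left₀ _ (pow_ne_zero _ hx0.ne')]
  rw [Finset.sum_congr rfl hterm, ← Finset.mul_sum]
  have h1 : ∑ a ∈ Finset.range (M + 1), (y / x) ^ (M - a)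
      = ∑ a ∈ Finset.range (M + 1), (y / x) ^ a := by
    refine Finset.sum_nbij' (fun a => M - a) (fun a => M - a) ?_ ?_ ?_ ?_ ?_ <;>
      intro a ha <;> simp only [Finset.mem_range] at * <;> omega
  rw [h1]
  have hr0 : 0 ≤ y / x := le_of_lt (div_pos hy0 hx0)
  have hr1 : y / x < 1 := (div_lt_one hx0).mpr hyx
  exact mul_le_mul_of_nonneg_left (geom_le hr0 hr1 (M+1)) (le_of_lt (pow_pos hx0 M))

lemma geo_main {x y : ℝ} (hx0 : 0 < x) (hx1 : x < 1) (hy0 : 0 < y) (hyx : y < x)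
    (N m : ℕ) :
    ∑ p ∈ (Finset.range (N+1) ×ˢ Finset.range (N+1)).filter
        (fun p => min (p.1 + p.2) N = m), x ^ p.1 * y ^ p.2
      ≤ x ^ m * ((1 - y)⁻¹ * (1 - y / x)⁻¹) := by
  have hy1 : y < 1 := hyx.trans hx1
  have hd1 : (0:ℝ) < 1 - y := by linarith
  have hr0 : 0 ≤ y / x := le_of_lt (div_pos hy0 hx0)
  have hr1 : y / x < 1 := (div_lt_one hx0).mpr hyx
  have hd2 : (0:ℝ) < 1 - y / x := by linarith
  have hRHSpos : 0 < x ^ m * ((1 - y)⁻¹ * (1 - y / x)⁻¹) := by positivity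
  rcases lt_trichotomy m N with hmN | hmN | hmN
  · -- m < N : the filter is the antidiagonal a + b = m
    have hset : (Finset.range (N+1) ×ˢ Finset.range (N+1)).filter
        (fun p => min (p.1 + p.2) N = m)
        = (Finset.range (m+1)).image (fun b => (m - b, b)) := by
      ext ⟨a, b⟩
      simp only [Finset.mem_filter, Finset.mem_product, Finset.mem_range, Finset.mem_image,
        Prod.mk.injEq]
      constructor
      · rintro ⟨⟨ha, hb⟩, hmin⟩
        exact ⟨b, by omega, by omega, rfl⟩
      · rintro ⟨b', hb', hab, rfl⟩
        omega
    rw [hset, Finset.sum_image (by intro p hp q hq h; simpa using congrArg Prod.snd h)]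
    have : ∑ b ∈ Finset.range (m+1), x ^ (m - b) * y ^ b
        = ∑ a ∈ Finset.range (m+1), x ^ a * y ^ (m - a) := by
      refine Finset.sum_nbij' (fun a => m - a) (fun a => m - a) ?_ ?_ ?_ ?_ ?_ <;>
        intro a ha <;> simp only [Finset.mem_range] at *
      · omega
      · omega
      · omega
      · omega
      · have : m - (m - a) = a := by omega
        rw [this]
    rw [this]
    refine (diag_sum_le hx0 hx1 hy0 hyx m).trans ?_
    have h1le : (1:ℝ) ≤ (1 - y)⁻¹ := by
      rw [le_inv_comm₀]
      · linarith
      · norm_num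
      · exact hd1
    nlinarith [pow_pos hx0 m, inv_pos.mpr hd2]
  · -- m = N
    subst hmN
    have hsplit : ∑ p ∈ (Finset.range (m+1) ×ˢ Finset.range (m+1)).filter
        (fun p => min (p.1 + p.2) m = m), x ^ p.1 * y ^ p.2
        = ∑ a ∈ Finset.range (m+1), ∑ b ∈ Finset.range (m+1),
          (if m ≤ a + b then x ^ a * y ^ b else 0) := by
      rw [Finset.sum_filter, Finset.sum_product]
      refine Finset.sum_congr rfl fun a _ => Finset.sum_congr rfl fun b _ => ?_
      congr 1
      simp only [eq_iff_iff]
      omega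
    rw [hsplit]
    have hinner : ∀ a ∈ Finset.range (m+1), ∑ b ∈ Finset.range (m+1),
        (if m ≤ a + b then x ^ a * y ^ b else 0)
        ≤ x ^ a * (y ^ (m - a) * (1 - y)⁻¹) := by
      intro a ha
      rw [Finset.mem_range] at ha
      have h1 : ∑ b ∈ Finset.range (m+1), (if m ≤ a + b then x ^ a * y ^ b else 0)
          = x ^ a * ∑ b ∈ Finset.Ico (m - a) (m+1), y ^ b := by
        rw [Finset.mul_sum]
        rw [← Finset.sum_filter]
        refine Finset.sum_nbij' (fun b => b) (fun b => b) ?_ ?_ ?_ ?_ ?_ <;>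
          intro b hb <;>
          simp only [Finset.mem_filter, Finset.mem_range, Finset.mem_Ico] at * <;>
          first | omega | rfl
      rw [h1]
      refine mul_le_mul_of_nonneg_left ?_ (le_of_lt (pow_pos hx0 a))
      rw [Finset.sum_Ico_eq_sum_range]
      have h2 : ∀ i ∈ Finset.range (m + 1 - (m - a)), y ^ (m - a + i) = y ^ (m-a) * y ^ i := by
        intro i _
        rw [pow_add]
      rw [Finset.sum_congr rfl h2, ← Finset.mul_sum]
      exact mul_le_mul_of_nonneg_left (geom_le (le_of_lt hy0) hy1 _)
        (le_of_lt (pow_pos hy0 _))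
    refine (Finset.sum_le_sum hinner).trans ?_
    have h3 : ∑ a ∈ Finset.range (m+1), x ^ a * (y ^ (m - a) * (1 - y)⁻¹)
        = (1 - y)⁻¹ * ∑ a ∈ Finset.range (m+1), x ^ a * y ^ (m - a) := by
      rw [Finset.mul_sum]
      refine Finset.sum_congr rfl fun a _ => by ring
    rw [h3]
    refine le_trans (mul_le_mul_of_nonneg_left (diag_sum_le hx0 hx1 hy0 hyx m)
      (le_of_lt (inv_pos.mpr hd1))) (le_of_eq (by ring))
  · -- m > N : empty
    have hempty : (Finset.range (N+1) ×ˢ Finset.range (N+1)).filter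
        (fun p => min (p.1 + p.2) N = m) = ∅ := by
      refine Finset.filter_false_of_mem fun p hp => ?_
      omega
    rw [hempty, Finset.sum_empty]
    exact le_of_lt hRHSpos


lemma pnorm_mono {p q : Pol N} (h : ∀ d, |coeff d q| ≤ |coeff d p|) : pnorm q ≤ pnorm p := by
  classical
  rw [pnorm_eq_sum (s := q.support ∪ p.support) Finset.subset_union_left,
    pnorm_eq_sum (p := p) (s := q.support ∪ p.support) Finset.subset_union_right]
  exact Finset.sum_le_sum fun d _ => h d

lemma pnorm_homogComp_le (k : ℕ) (p : Pol N) :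
    pnorm (homogeneousComponent k p) ≤ pnorm p := by
  refine pnorm_mono fun d => ?_
  rw [coeff_homogeneousComponent]
  split
  · exact le_rfl
  · simp [abs_nonneg]

lemma homogComp_self {r : ℕ} {p : Pol N} (hp : p.IsHomogeneous r) :
    homogeneousComponent r p = p := by
  ext d
  rw [coeff_homogeneousComponent]
  split
  · rfl
  · exact (hp.coeff_eq_zero (by assumption)).symm

lemma rot_iter_N {n : ℕ} (i : Fin (n+1)) : (rot (n+1))^[n+1] i = i := by
  rw [rot_iter_apply]
  simp

lemma oplus_sum {α : Type*} (s : Finset α) (p : α → Pol N) :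
    oplus (∑ a ∈ s, p a) = ∑ a ∈ s, oplus (p a) := by
  unfold oplus
  rw [Finset.sum_comm]
  refine Finset.sum_congr rfl fun l _ => ?_
  rw [cshiftP_iterate, map_sum]
  exact Finset.sum_congr rfl fun a _ => (cshiftP_iterate l (p a)).symm

lemma oplus_zero : oplus (0 : Pol N) = 0 := by
  have := oplus_sum (∅ : Finset ℕ) (fun _ => (0 : Pol N))
  simpa using this

lemma cshiftP_iter_zero (k : ℕ) : cshiftP^[k] (0 : Pol N) = 0 := by
  rw [cshiftP_iterate, map_zero]

lemma sitesB_of_rangeLE {m : ℕ} {p : Pol N} (h : RangeLE m p) :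
    SitesB p (fun j => (j : ℕ) ≤ m) := by
  intro d hd j hj
  exact h d hd j (Finset.mem_filter.mpr ⟨Finset.mem_univ j, hj⟩)

lemma rangeLE_of_sitesB {m : ℕ} {p : Pol N} (h : SitesB p (fun j => (j : ℕ) ≤ m)) :
    RangeLE m p := by
  intro d hd j hj
  exact h d hd j (Finset.mem_filter.mp hj).2

lemma term_sites {n a b l : ℕ} (hl : l < n + 1) (hab : a + b < n + 1)
    {Fa Gb : Pol (n + 1)} (hFa : SitesB Fa fun j => (j : ℕ) ≤ a)
    (hGb : SitesB Gb fun j => (j : ℕ) ≤ b) :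
    SitesB (cshiftP^[if l ≤ a then 0 else (n + 1) - l] (pbracket Fa (cshiftP^[l] Gb)))
      (fun j => (j : ℕ) ≤ a + b) := by
  have hG1 : SitesB (cshiftP^[l] Gb)
      (fun j => ∃ i : Fin (n + 1), (i : ℕ) ≤ b ∧ j = (rot (n + 1))^[l] i) := by
    rw [cshiftP_iterate]
    exact sitesB_mono (sitesB_rename hGb l) fun j hj => hj
  by_cases hla : l ≤ a
  · rw [if_pos hla, Function.iterate_zero_apply]
    refine sitesB_pbracket (sitesB_mono hFa fun j hj => hj.trans (Nat.le_add_right a b))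
      (sitesB_mono hG1 ?_)
    rintro j ⟨i, hib, rfl⟩
    rw [rot_iter_val, Nat.mod_eq_of_lt (by omega)]
    omega
  · rw [if_neg hla]
    push_neg at hla
    by_cases hlb : n + 1 ≤ l + b
    · rw [cshiftP_iterate]
      have hbr : SitesB (pbracket Fa (cshiftP^[l] Gb))
          (fun j => (j : ℕ) ≤ a ∨ ∃ i : Fin (n + 1), (i : ℕ) ≤ b ∧ j = (rot (n + 1))^[l] i) :=
        sitesB_pbracket (sitesB_mono hFa fun j hj => Or.inl hj)
          (sitesB_mono hG1 fun j hj => Or.inr hj)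
      refine sitesB_mono (sitesB_rename hbr ((n + 1) - l)) ?_
      rintro j ⟨j0, hj0, rfl⟩
      rcases hj0 with hj0 | ⟨i, hib, rfl⟩
      · rw [rot_iter_val, Nat.mod_eq_of_lt (by omega)]
        omega
      · rw [← Function.iterate_add_apply, (by omega : (n + 1) - l + l = n + 1), rot_iter_N]
        omega
    · push_neg at hlb
      have h0 : pbracket Fa (cshiftP^[l] Gb) = 0 := by
        refine pbracket_eq_zero_of_disjoint hFa hG1 ?_
        rintro j ⟨hja, ⟨i, hib, rfl⟩⟩
        rw [rot_iter_val, Nat.mod_eq_of_lt (by omega)] at hja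
        omega
      rw [h0, cshiftP_iter_zero]
      exact sitesB_zero _

lemma sitesB_homogComp {k : ℕ} {p : Pol N} {P : Fin N → Prop} (h : SitesB p P) :
    SitesB (homogeneousComponent k p) P := by
  intro d hd j hj
  refine h d ?_ j hj
  rw [MvPolynomial.mem_support_iff] at hd ⊢
  rw [coeff_homogeneousComponent] at hd
  by_cases hdd : d.degree = k
  · rwa [if_pos hdd] at hd
  · rw [if_neg hdd] at hd
    exact absurd rfl hd

lemma sum_swap_filter (N m : ℕ) (f : ℕ → ℕ → ℝ) :
    ∑ p ∈ (Finset.range (N + 1) ×ˢ Finset.range (N + 1)).filter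
        (fun p => min (p.1 + p.2) N = m), f p.1 p.2
      = ∑ p ∈ (Finset.range (N + 1) ×ˢ Finset.range (N + 1)).filter
        (fun p => min (p.1 + p.2) N = m), f p.2 p.1 := by
  refine Finset.sum_nbij' Prod.swap Prod.swap ?_ ?_ ?_ ?_ ?_ <;>
    rintro ⟨u, v⟩ hp <;>
    simp only [Finset.mem_filter, Finset.mem_product, Finset.mem_range, Prod.swap] at * <;>
    first | omega | rfl

lemma exp_pow (σ : ℝ) (k : ℕ) : Real.exp (-σ * k) = Real.exp (-σ) ^ k := by
  rw [← Real.exp_nat_mul]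
  congr 1
  ring

lemma geo_final_lt {σ1 σ2 : ℝ} (h1 : 0 < σ1) (hlt : σ1 < σ2) (N m : ℕ) :
    ∑ p ∈ (Finset.range (N + 1) ×ˢ Finset.range (N + 1)).filter
        (fun p => min (p.1 + p.2) N = m),
      Real.exp (-σ1) ^ p.1 * Real.exp (-σ2) ^ p.2
      ≤ Real.exp (-σ1 * m) /
        ((1 - Real.exp (-σ2)) * (1 - Real.exp (-(σ2 - σ1)))) := by
  have hx0 : 0 < Real.exp (-σ1) := Real.exp_pos _
  have hy0 : 0 < Real.exp (-σ2) := Real.exp_pos _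
  have hx1 : Real.exp (-σ1) < 1 := by
    rw [← Real.exp_zero]
    exact Real.exp_lt_exp.mpr (by linarith)
  have hyx : Real.exp (-σ2) < Real.exp (-σ1) := Real.exp_lt_exp.mpr (by linarith)
  have hdiv : Real.exp (-(σ2 - σ1)) = Real.exp (-σ2) / Real.exp (-σ1) := by
    rw [← Real.exp_sub]
    congr 1
    ring
  have := geo_main hx0 hx1 hy0 hyx N m
  rw [hdiv, exp_pow, div_eq_mul_inv, mul_inv]
  exact this

lemma geo_final {σ1 σ2 : ℝ} (h1 : 0 < σ1) (h2 : 0 < σ2) (hne : σ1 ≠ σ2) (N m : ℕ) :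
    ∑ p ∈ (Finset.range (N + 1) ×ˢ Finset.range (N + 1)).filter
        (fun p => min (p.1 + p.2) N = m),
      Real.exp (-σ1) ^ p.1 * Real.exp (-σ2) ^ p.2
      ≤ Real.exp (-(min σ1 σ2) * m) /
        ((1 - Real.exp (-(max σ1 σ2))) * (1 - Real.exp (-|σ1 - σ2|))) := by
  rcases lt_or_gt_of_ne hne with hlt | hlt
  · have := geo_final_lt h1 hlt N m
    rwa [min_eq_left hlt.le, max_eq_right hlt.le,
      (by rw [abs_of_neg (by linarith : σ1 - σ2 < 0)]; ring : |σ1 - σ2| = σ2 - σ1)]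
  · have := geo_final_lt h2 hlt N m
    rw [sum_swap_filter N m (fun u v => Real.exp (-σ1) ^ u * Real.exp (-σ2) ^ v)]
    rw [min_eq_right hlt.le, max_eq_left hlt.le,
      (by rw [abs_of_pos (by linarith : 0 < σ1 - σ2)] : |σ1 - σ2| = σ1 - σ2)]
    refine le_trans (le_of_eq ?_) this
    exact Finset.sum_congr rfl fun p _ => by ring


end S5

/-- if `F = f^⊕`, `G = g^⊕` are cyclically symmetric homogeneous
polynomials of degrees `r', r''` with seeds of class `D(C_f,σ')`, `D(C_g,σ'')` and
`σ' ≠ σ''`, then `{F,G}` admits a seed of class `D(C_h, min(σ',σ''))` with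
`C_h = r' r'' C_f C_g / ((1 − e^{−max(σ',σ'')})(1 − e^{−|σ'−σ''|}))`. -/
theorem stmt5 (N : ℕ) (r' r'' : ℕ) (f g : Pol N) (Cf Cg σ' σ'' : ℝ)
    (hf : f.IsHomogeneous r') (hg : g.IsHomogeneous r'')
    (hCf : 0 < Cf) (hCg : 0 < Cg) (hσ' : 0 < σ') (hσ'' : 0 < σ'')
    (hfD : SeedClassD Cf σ' f) (hgD : SeedClassD Cg σ'' g)
    (hne : σ' ≠ σ'') :
    ∃ h : Pol N, oplus h = pbracket (oplus f) (oplus g) ∧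
      SeedClassD ((r' : ℝ) * r'' * Cf * Cg /
          ((1 - Real.exp (-(max σ' σ''))) * (1 - Real.exp (-|σ' - σ''|))))
        (min σ' σ'') h := by
  classical
  have hmax : 0 < max σ' σ'' := lt_max_of_lt_left hσ'
  have habs : 0 < |σ' - σ''| := abs_pos.mpr (sub_ne_zero.mpr hne)
  have d1 : 0 < 1 - Real.exp (-(max σ' σ'')) := by
    have : Real.exp (-(max σ' σ'')) < 1 := by
      rw [← Real.exp_zero]
      exact Real.exp_lt_exp.mpr (by linarith)
    linarith
  have d2 : 0 < 1 - Real.exp (-|σ' - σ''|) := by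
    have : Real.exp (-|σ' - σ''|) < 1 := by
      rw [← Real.exp_zero]
      exact Real.exp_lt_exp.mpr (by linarith)
    linarith
  have hnum : (0:ℝ) ≤ (r' : ℝ) * r'' * Cf * Cg :=
    mul_nonneg (mul_nonneg (mul_nonneg (Nat.cast_nonneg _) (Nat.cast_nonneg _)) hCf.le) hCg.le
  have hCh : 0 ≤ (r' : ℝ) * r'' * Cf * Cg /
      ((1 - Real.exp (-(max σ' σ''))) * (1 - Real.exp (-|σ' - σ''|))) :=
    div_nonneg hnum (mul_nonneg d1.le d2.le)
  cases N with
  | zero =>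
      have e0 : ∀ p : Pol 0, oplus p = 0 := fun p => by
        rw [oplus, Finset.Icc_eq_empty (by omega), Finset.sum_empty]
      refine ⟨0, ?_, fun _ => 0, ⟨by simp, ?_⟩, ?_⟩
      · rw [e0, e0, e0, pbracket]
        rw [Finset.univ_eq_empty, Finset.sum_empty]
      · intro m d hd
        simp at hd
      · intro m
        rw [S5.pnorm_zero]
        exact mul_nonneg hCh (Real.exp_nonneg _)
  | succ n =>
      obtain ⟨F0, ⟨hFsum, hFrange⟩, hFdec⟩ := hfD
      obtain ⟨G0, ⟨hGsum, hGrange⟩, hGdec⟩ := hgD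
      set x := Real.exp (-σ') with hxdef
      set y := Real.exp (-σ'') with hydef
      set F : ℕ → Pol (n+1) := fun m => homogeneousComponent r' (F0 m) with hFdef
      set G : ℕ → Pol (n+1) := fun m => homogeneousComponent r'' (G0 m) with hGdef
      have hFhom : ∀ m, (F m).IsHomogeneous r' :=
        fun m => homogeneousComponent_isHomogeneous r' (F0 m)
      have hGhom : ∀ m, (G m).IsHomogeneous r'' :=
        fun m => homogeneousComponent_isHomogeneous r'' (G0 m)
      have hfF : f = ∑ m ∈ Finset.range (n + 1 + 1), F m := by
        conv_lhs => rw [← S5.homogComp_self hf, hFsum]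
        rw [map_sum]
      have hgG : g = ∑ m ∈ Finset.range (n + 1 + 1), G m := by
        conv_lhs => rw [← S5.homogComp_self hg, hGsum]
        rw [map_sum]
      have hFsites : ∀ m, S5.SitesB (F m) (fun j => (j : ℕ) ≤ m) :=
        fun m => S5.sitesB_homogComp (S5.sitesB_of_rangeLE (hFrange m))
      have hGsites : ∀ m, S5.SitesB (G m) (fun j => (j : ℕ) ≤ m) :=
        fun m => S5.sitesB_homogComp (S5.sitesB_of_rangeLE (hGrange m))
      have hFdecay : ∀ m, pnorm (F m) ≤ Cf * x ^ m := by
        intro m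
        refine ((S5.pnorm_homogComp_le _ _).trans (hFdec m)).trans (le_of_eq ?_)
        rw [S5.exp_pow]
      have hGdecay : ∀ m, pnorm (G m) ≤ Cg * y ^ m := by
        intro m
        refine ((S5.pnorm_homogComp_le _ _).trans (hGdec m)).trans (le_of_eq ?_)
        rw [S5.exp_pow]
      set term : ℕ × ℕ → Pol (n+1) := fun ab => ∑ l ∈ Finset.range (n+1),
          cshiftP^[if l ≤ ab.1 then 0 else (n+1) - l]
            (pbracket (F ab.1) (cshiftP^[l] (G ab.2))) with htermdef
      set H : ℕ → Pol (n+1) := fun m =>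
          ∑ ab ∈ (Finset.range (n+1+1) ×ˢ Finset.range (n+1+1)).filter
            (fun ab => min (ab.1 + ab.2) (n+1) = m), term ab with hHdef
      refine ⟨∑ m ∈ Finset.range (n + 1 + 1), H m, ?_, H, ⟨rfl, ?_⟩, ?_⟩
      · -- oplus identity
        rw [S5.oplus_sum]
        have h1 : ∀ m ∈ Finset.range (n+1+1), oplus (H m)
            = ∑ ab ∈ (Finset.range (n+1+1) ×ˢ Finset.range (n+1+1)).filter
              (fun ab => min (ab.1 + ab.2) (n+1) = m), oplus (term ab) :=
          fun m _ => S5.oplus_sum _ _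
        rw [Finset.sum_congr rfl h1,
          Finset.sum_fiberwise_of_maps_to
            (fun ab _ => Finset.mem_range.mpr (by omega)) (fun ab => oplus (term ab))]
        have h2 : ∀ ab ∈ Finset.range (n+1+1) ×ˢ Finset.range (n+1+1),
            oplus (term ab) = ∑ l ∈ Finset.range (n+1),
              oplus (pbracket (F ab.1) (cshiftP^[l] (G ab.2))) := by
          intro ab _
          rw [htermdef]
          rw [S5.oplus_sum]
          exact Finset.sum_congr rfl fun l _ => S5.oplus_cshiftP_iter _ _
        rw [Finset.sum_congr rfl h2, Finset.sum_comm]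
        have h3 : ∀ l ∈ Finset.range (n+1),
            (∑ ab ∈ Finset.range (n+1+1) ×ˢ Finset.range (n+1+1),
              oplus (pbracket (F ab.1) (cshiftP^[l] (G ab.2))))
            = oplus (pbracket f (cshiftP^[l] g)) := by
          intro l _
          rw [Finset.sum_product]
          have e1 : ∀ a, (∑ b ∈ Finset.range (n+1+1),
              oplus (pbracket (F a) (cshiftP^[l] (G b))))
              = oplus (pbracket (F a) (cshiftP^[l] g)) := by
            intro a
            rw [← S5.oplus_sum, ← S5.pbracket_sum_right]
            have : cshiftP^[l] g = ∑ b ∈ Finset.range (n+1+1), cshiftP^[l] (G b) := by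
              rw [hgG, S5.cshiftP_iterate, map_sum]
              exact Finset.sum_congr rfl fun b _ => (S5.cshiftP_iterate l (G b)).symm
            rw [this]
          rw [Finset.sum_congr rfl fun a _ => e1 a, ← S5.oplus_sum, ← S5.pbracket_sum_left, ← hfF]
        rw [Finset.sum_congr rfl h3]
        exact S5.oplus_pbracket_core f g
      · -- RangeLE
        intro m
        by_cases hm : m < n + 1
        · refine S5.rangeLE_of_sitesB ?_
          rw [hHdef]
          refine S5.sitesB_sum fun ab hab => ?_
          have habm : ab.1 + ab.2 = m := by
            simp only [Finset.mem_filter, Finset.mem_product, Finset.mem_range] at hab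
            omega
          rw [htermdef]
          refine S5.sitesB_sum fun l hl => ?_
          have h := S5.term_sites (n := n) (a := ab.1) (b := ab.2)
            (Finset.mem_range.mp hl) (by omega) (hFsites ab.1) (hGsites ab.2)
          rw [habm] at h
          exact h
        · intro d hd j hj
          have := j.isLt
          omega
      · -- Decay
        intro m
        have step1 : pnorm (H m) ≤
            ∑ ab ∈ (Finset.range (n+1+1) ×ˢ Finset.range (n+1+1)).filter
              (fun ab => min (ab.1 + ab.2) (n+1) = m),
              ∑ l ∈ Finset.range (n+1),
                pnorm (pbracket (F ab.1) (cshiftP^[l] (G ab.2))) := by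
          rw [hHdef]
          refine (S5.pnorm_sum_le _ _).trans (Finset.sum_le_sum fun ab _ => ?_)
          rw [htermdef]
          refine (S5.pnorm_sum_le _ _).trans (Finset.sum_le_sum fun l _ => ?_)
          rw [S5.cshiftP_iterate]
          exact S5.pnorm_rename_le _
        have step2 : ∀ ab ∈ (Finset.range (n+1+1) ×ˢ Finset.range (n+1+1)).filter
            (fun ab => min (ab.1 + ab.2) (n+1) = m),
            (∑ l ∈ Finset.range (n+1),
              pnorm (pbracket (F ab.1) (cshiftP^[l] (G ab.2))))
            ≤ (r' : ℝ) * r'' * Cf * Cg * (x ^ ab.1 * y ^ ab.2) := by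
          intro ab _
          refine (S5.key_bracket_sum _ _ (hFhom ab.1) (hGhom ab.2)).trans ?_
          have h1 := hFdecay ab.1
          have h2 := hGdecay ab.2
          have hxa : (0:ℝ) ≤ Cf * x ^ ab.1 :=
            mul_nonneg hCf.le (pow_nonneg (Real.exp_pos _).le _)
          have hmul : pnorm (F ab.1) * pnorm (G ab.2) ≤ (Cf * x ^ ab.1) * (Cg * y ^ ab.2) :=
            mul_le_mul h1 h2 (S5.pnorm_nonneg _) hxa
          have hrr : (0:ℝ) ≤ (r' : ℝ) * r'' :=
            mul_nonneg (Nat.cast_nonneg _) (Nat.cast_nonneg _)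
          calc (r' : ℝ) * r'' * pnorm (F ab.1) * pnorm (G ab.2)
              = (r' : ℝ) * r'' * (pnorm (F ab.1) * pnorm (G ab.2)) := by ring
            _ ≤ (r' : ℝ) * r'' * ((Cf * x ^ ab.1) * (Cg * y ^ ab.2)) :=
                mul_le_mul_of_nonneg_left hmul hrr
            _ = (r' : ℝ) * r'' * Cf * Cg * (x ^ ab.1 * y ^ ab.2) := by ring
        have step3 : pnorm (H m) ≤ (r' : ℝ) * r'' * Cf * Cg *
            ∑ ab ∈ (Finset.range (n+1+1) ×ˢ Finset.range (n+1+1)).filter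
              (fun ab => min (ab.1 + ab.2) (n+1) = m), x ^ ab.1 * y ^ ab.2 := by
          refine step1.trans ?_
          rw [Finset.mul_sum]
          exact Finset.sum_le_sum step2
        refine step3.trans ?_
        have hgeo := S5.geo_final hσ' hσ'' hne (n+1) m
        refine le_trans (mul_le_mul_of_nonneg_left hgeo hnum) (le_of_eq ?_)
        ring
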